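/- Let A ∈ ℝ^{M×N} have full row rank, W = Aᵀ(AAᵀ)⁻¹, and Z = WA. Suppose s − x ∈ ℝ^N and w ∈ ℝ^M are random with E[(s−x)ᵀWw] = 0, E[(s−x)(s−x)ᵀ] = v̄²·I_N, and E[wwᵀ] = σ²·I_M. Then for r = s + γW(A x + w − A s), one has (1/N)·E[‖r − x‖²] = (v̄²/N)·(N + (γ² − 2γ)M) + (γ²σ²/N)·tr(W Wᵀ). -/

import Mathlib

open Matrix MeasureTheory

private lemma mv_dot_mv {k l n : ℕ} (X : Matrix (Fin n) (Fin k) ℝ)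
    (Y : Matrix (Fin n) (Fin l) ℝ) (a : Fin k → ℝ) (b : Fin l → ℝ) :
    (X *ᵥ a) ⬝ᵥ (Y *ᵥ b) = a ⬝ᵥ ((Xᵀ * Y) *ᵥ b) := by
  rw [dotProduct_mulVec, ← vecMul_transpose, vecMul_vecMul, ← dotProduct_mulVec]

private lemma dot_mv_sum {k l : ℕ} (C : Matrix (Fin k) (Fin l) ℝ) (a : Fin k → ℝ)
    (b : Fin l → ℝ) :
    a ⬝ᵥ (C *ᵥ b) = ∑ i, ∑ j, C i j * (a i * b j) := by
  simp only [dotProduct, mulVec, Finset.mul_sum]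
  exact Finset.sum_congr rfl fun i _ => Finset.sum_congr rfl fun j _ => by ring

private lemma integrable_quad {k l : ℕ} {Ω : Type*} [MeasurableSpace Ω] {μ : Measure Ω}
    (C : Matrix (Fin k) (Fin l) ℝ) (f : Ω → Fin k → ℝ) (g : Ω → Fin l → ℝ)
    (hint : ∀ i j, Integrable (fun ω => f ω i * g ω j) μ) :
    Integrable (fun ω => f ω ⬝ᵥ (C *ᵥ g ω)) μ := by
  simp only [dot_mv_sum]
  exact integrable_finset_sum _ fun i _ => integrable_finset_sum _ fun j _ =>
    (hint i j).const_mul _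

private lemma integral_quad {k l : ℕ} {Ω : Type*} [MeasurableSpace Ω] {μ : Measure Ω}
    (C : Matrix (Fin k) (Fin l) ℝ) (f : Ω → Fin k → ℝ) (g : Ω → Fin l → ℝ)
    (hint : ∀ i j, Integrable (fun ω => f ω i * g ω j) μ) :
    ∫ ω, f ω ⬝ᵥ (C *ᵥ g ω) ∂μ = ∑ i, ∑ j, C i j * ∫ ω, f ω i * g ω j ∂μ := by
  simp only [dot_mv_sum]
  rw [integral_finset_sum Finset.univ fun i _ => integrable_finset_sum Finset.univ fun j _ =>
    (hint i j).const_mul (C i j)]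
  exact Finset.sum_congr rfl fun i _ => by
    rw [integral_finset_sum _ fun j _ => (hint i j).const_mul _]
    exact Finset.sum_congr rfl fun j _ => integral_const_mul _ _

private lemma quad_val {k : ℕ} {Ω : Type*} [MeasurableSpace Ω] {μ : Measure Ω}
    (C : Matrix (Fin k) (Fin k) ℝ) (f : Ω → Fin k → ℝ) (c : ℝ)
    (hint : ∀ i j, Integrable (fun ω => f ω i * f ω j) μ)
    (hcov : ∀ i j, ∫ ω, f ω i * f ω j ∂μ = if i = j then c else 0) :
    ∫ ω, f ω ⬝ᵥ (C *ᵥ f ω) ∂μ = c * C.trace := by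
  rw [integral_quad C f f hint]
  simp only [hcov, mul_ite, mul_zero, Finset.sum_ite_eq, Finset.mem_univ, if_true]
  rw [Matrix.trace, Finset.mul_sum]
  exact Finset.sum_congr rfl fun i _ => mul_comm _ _

theorem tista_tau_estimator {M N : ℕ} (hN : 0 < N)
    {Ω : Type*} [MeasurableSpace Ω] (μ : Measure Ω)
    (A : Matrix (Fin M) (Fin N) ℝ) (hA : IsUnit (A * Aᵀ))
    (W : Matrix (Fin N) (Fin M) ℝ) (hW : W = Aᵀ * (A * Aᵀ)⁻¹)
    (x s : Ω → Fin N → ℝ) (w : Ω → Fin M → ℝ)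
    (γ σ vbar : ℝ)
    (hcross : ∫ ω, (s ω - x ω) ⬝ᵥ (W *ᵥ w ω) ∂μ = 0)
    (hcov : ∀ i j, ∫ ω, (s ω i - x ω i) * (s ω j - x ω j) ∂μ
      = if i = j then vbar ^ 2 else 0)
    (hwcov : ∀ i j, ∫ ω, (w ω i) * (w ω j) ∂μ = if i = j then σ ^ 2 else 0)
    (hint1 : ∀ i j, Integrable (fun ω => (s ω i - x ω i) * (s ω j - x ω j)) μ)
    (hint2 : ∀ i j, Integrable (fun ω => (s ω i - x ω i) * (w ω j)) μ)
    (hint3 : ∀ i j, Integrable (fun ω => (w ω i) * (w ω j)) μ)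
    (r : Ω → Fin N → ℝ)
    (hr : ∀ ω, r ω = s ω + γ • (W *ᵥ (A *ᵥ x ω + w ω - A *ᵥ s ω))) :
    (1 / (N : ℝ)) * ∫ ω, (r ω - x ω) ⬝ᵥ (r ω - x ω) ∂μ
      = (vbar ^ 2 / (N : ℝ)) * ((N : ℝ) + (γ ^ 2 - 2 * γ) * (M : ℝ))
        + (γ ^ 2 * σ ^ 2 / (N : ℝ)) * (W * Wᵀ).trace := by
  have hdet : IsUnit (A * Aᵀ).det := (Matrix.isUnit_iff_isUnit_det _).mp hA
  have hinv : (A * Aᵀ) * (A * Aᵀ)⁻¹ = 1 := Matrix.mul_nonsing_inv _ hdet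
  have hinv' : (A * Aᵀ)⁻¹ * (A * Aᵀ) = 1 := Matrix.nonsing_inv_mul _ hdet
  have hBs : ((A * Aᵀ)⁻¹)ᵀ = (A * Aᵀ)⁻¹ := by
    rw [Matrix.transpose_nonsing_inv]
    congr 1
    rw [Matrix.transpose_mul, Matrix.transpose_transpose]
  have hcancel : ∀ {p : ℕ} (C : Matrix (Fin M) (Fin p) ℝ),
      (A * Aᵀ)⁻¹ * (A * (Aᵀ * C)) = C := by
    intro p C
    rw [← Matrix.mul_assoc A, ← Matrix.mul_assoc, hinv', Matrix.one_mul]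
  set Z := W * A with hZ
  have hZs : Zᵀ = Z := by
    rw [hZ, hW, Matrix.transpose_mul, Matrix.transpose_mul, Matrix.transpose_transpose,
      hBs, Matrix.mul_assoc]
  have hZZ : Z * Z = Z := by
    rw [hZ, hW]; simp only [Matrix.mul_assoc]; rw [hcancel]
  have hZW : Z * W = W := by
    rw [hZ, hW]; simp only [Matrix.mul_assoc]; rw [hcancel]
  have htrZ : Z.trace = (M : ℝ) := by
    rw [hZ, Matrix.trace_mul_comm, hW, ← Matrix.mul_assoc, hinv, Matrix.trace_one]
    simp
  have hkey : ∀ ω, (r ω - x ω) ⬝ᵥ (r ω - x ω) =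
      (s ω - x ω) ⬝ᵥ ((1 : Matrix (Fin N) (Fin N) ℝ) *ᵥ (s ω - x ω))
      + (γ ^ 2 - 2 * γ) * ((s ω - x ω) ⬝ᵥ (Z *ᵥ (s ω - x ω)))
      + (2 * γ - 2 * γ ^ 2) * ((s ω - x ω) ⬝ᵥ (W *ᵥ w ω))
      + γ ^ 2 * (w ω ⬝ᵥ ((Wᵀ * W) *ᵥ w ω)) := by
    intro ω
    set d := s ω - x ω with hd
    have hrx : r ω - x ω = d + γ • (W *ᵥ w ω) - γ • (Z *ᵥ d) := by
      rw [hr ω, hd, hZ, ← Matrix.mulVec_mulVec]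
      simp only [Matrix.mulVec_sub, Matrix.mulVec_add]
      module
    have hq : (Z *ᵥ d) ⬝ᵥ (Z *ᵥ d) = d ⬝ᵥ (Z *ᵥ d) := by
      rw [mv_dot_mv, hZs, hZZ]
    have hp : (W *ᵥ w ω) ⬝ᵥ (W *ᵥ w ω) = w ω ⬝ᵥ ((Wᵀ * W) *ᵥ w ω) := mv_dot_mv _ _ _ _
    have hqp : (Z *ᵥ d) ⬝ᵥ (W *ᵥ w ω) = d ⬝ᵥ (W *ᵥ w ω) := by
      rw [mv_dot_mv, hZs, hZW]
    rw [hrx]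
    simp only [dotProduct_add, add_dotProduct, dotProduct_sub,
      sub_dotProduct, dotProduct_smul, smul_dotProduct,
      smul_eq_mul, Matrix.one_mulVec]
    rw [dotProduct_comm (W *ᵥ w ω) d, dotProduct_comm (Z *ᵥ d) d,
      dotProduct_comm (W *ᵥ w ω) (Z *ᵥ d), hq, hp, hqp]
    ring
  have e1 : Integrable
      (fun ω => (s ω - x ω) ⬝ᵥ ((1 : Matrix (Fin N) (Fin N) ℝ) *ᵥ (s ω - x ω))) μ :=
    integrable_quad _ _ _ hint1
  have e2 : Integrable (fun ω => (s ω - x ω) ⬝ᵥ (Z *ᵥ (s ω - x ω))) μ :=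
    integrable_quad Z _ _ hint1
  have e3 : Integrable (fun ω => (s ω - x ω) ⬝ᵥ (W *ᵥ w ω)) μ :=
    integrable_quad W _ _ hint2
  have e4 : Integrable (fun ω => w ω ⬝ᵥ ((Wᵀ * W) *ᵥ w ω)) μ :=
    integrable_quad _ _ _ hint3
  have hsplit : ∫ ω, (r ω - x ω) ⬝ᵥ (r ω - x ω) ∂μ
      = (∫ ω, (s ω - x ω) ⬝ᵥ ((1 : Matrix (Fin N) (Fin N) ℝ) *ᵥ (s ω - x ω)) ∂μ)
        + (γ ^ 2 - 2 * γ) * ∫ ω, (s ω - x ω) ⬝ᵥ (Z *ᵥ (s ω - x ω)) ∂μ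
        + (2 * γ - 2 * γ ^ 2) * ∫ ω, (s ω - x ω) ⬝ᵥ (W *ᵥ w ω) ∂μ
        + γ ^ 2 * ∫ ω, w ω ⬝ᵥ ((Wᵀ * W) *ᵥ w ω) ∂μ := by
    simp_rw [hkey]
    have i3 : Integrable (fun ω =>
        (s ω - x ω) ⬝ᵥ ((1 : Matrix (Fin N) (Fin N) ℝ) *ᵥ (s ω - x ω))
        + (γ ^ 2 - 2 * γ) * ((s ω - x ω) ⬝ᵥ (Z *ᵥ (s ω - x ω)))) μ :=
      e1.add (e2.const_mul _)
    have i2 : Integrable (fun ω =>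
        (s ω - x ω) ⬝ᵥ ((1 : Matrix (Fin N) (Fin N) ℝ) *ᵥ (s ω - x ω))
        + (γ ^ 2 - 2 * γ) * ((s ω - x ω) ⬝ᵥ (Z *ᵥ (s ω - x ω)))
        + (2 * γ - 2 * γ ^ 2) * ((s ω - x ω) ⬝ᵥ (W *ᵥ w ω))) μ :=
      i3.add (e3.const_mul _)
    rw [integral_add i2 (e4.const_mul _), integral_add i3 (e3.const_mul _),
      integral_add e1 (e2.const_mul _), integral_const_mul, integral_const_mul,
      integral_const_mul]
  have q1 : ∫ ω, (s ω - x ω) ⬝ᵥ ((1 : Matrix (Fin N) (Fin N) ℝ) *ᵥ (s ω - x ω)) ∂μ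
      = vbar ^ 2 * (1 : Matrix (Fin N) (Fin N) ℝ).trace :=
    quad_val _ (fun ω => s ω - x ω) _ hint1 hcov
  have q2 : ∫ ω, (s ω - x ω) ⬝ᵥ (Z *ᵥ (s ω - x ω)) ∂μ = vbar ^ 2 * Z.trace :=
    quad_val Z (fun ω => s ω - x ω) _ hint1 hcov
  have q4 : ∫ ω, w ω ⬝ᵥ ((Wᵀ * W) *ᵥ w ω) ∂μ = σ ^ 2 * (Wᵀ * W).trace :=
    quad_val _ w _ hint3 hwcov
  rw [hsplit, hcross, q1, q2, q4, htrZ, Matrix.trace_one,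
    Matrix.trace_mul_comm Wᵀ W]
  have hN' : (N : ℝ) ≠ 0 := Nat.cast_ne_zero.mpr hN.ne'
  simp only [Fintype.card_fin]
  field_simp
  ring
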